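/- For every τ ∈ ℍ and every w ∈ ℂ with 0 < |q| < |q_w| < 1, the limit as z → 0 of ( P̃₁(w,z,τ) − 1/(2πiz) ) equals P₁(w,τ). -/

import Mathlib

open Complex Filter Topology

/-- `e(x) = e^{2πix}`; thus `q = eF τ`, `q_w = eF w`, `q_z = eF z`. -/
noncomputable def eF (x : ℂ) : ℂ := Complex.exp (2 * (Real.pi : ℂ) * Complex.I * x)

lemma abs_eF (z : ℂ) : ‖eF z‖ = Real.exp (-(2 * Real.pi * z.im)) := by
  rw [eF, Complex.norm_exp]
  congr 1
  simp [Complex.mul_re, Complex.mul_im]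

noncomputable def Ee (u : ℂ) : ℂ := ∑' n : ℕ, u ^ n / ((n + 2).factorial : ℂ)

lemma summable_aux (u : ℂ) (k : ℕ) : Summable (fun n : ℕ => u ^ n / ((n + k).factorial : ℂ)) := by
  apply Summable.of_norm_bounded (Real.summable_pow_div_factorial ‖u‖)
  intro n
  rw [norm_div, norm_pow]
  apply div_le_div_of_nonneg_left (by positivity) (by positivity)
  · norm_cast
    exact_mod_cast Nat.cast_le.mpr (Nat.factorial_le (Nat.le_add_right n k))

lemma exp_eq_Ee (u : ℂ) : Complex.exp u = 1 + u + u ^ 2 * Ee u := by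
  have h0 : Complex.exp u = ∑' n : ℕ, u ^ n / ((n.factorial : ℕ) : ℂ) := by
    rw [Complex.exp_eq_exp_ℂ, NormedSpace.exp_eq_tsum_div]
  have hs : Summable (fun n : ℕ => u ^ n / ((n.factorial : ℕ) : ℂ)) := by
    simpa using summable_aux u 0
  have h1 : Summable (fun n : ℕ => u ^ (n + 1) / ((n + 1).factorial : ℂ)) := by
    have := (summable_aux u 1).mul_left u
    refine this.congr fun n => ?_
    rw [pow_succ']; ring
  rw [h0, Summable.tsum_eq_zero_add hs, Summable.tsum_eq_zero_add h1]
  have h2 : ∑' n : ℕ, u ^ (n + 1 + 1) / ((n + 1 + 1).factorial : ℂ) = u ^ 2 * Ee u := by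
    rw [Ee, ← tsum_mul_left]
    refine tsum_congr fun n => ?_
    rw [show n + 1 + 1 = n + 2 by ring]
    rw [pow_add]; ring
  rw [h2]
  simp [Nat.factorial]
  ring

lemma Ee_tendsto : Tendsto Ee (𝓝 0) (𝓝 (1/2)) := by
  have hEe : ∀ u : ℂ, Ee u = 1/2 + u * ∑' n : ℕ, u ^ n / ((n + 3).factorial : ℂ) := by
    intro u
    rw [Ee, Summable.tsum_eq_zero_add (summable_aux u 2)]
    have h2 : ∑' n : ℕ, u ^ (n + 1) / ((n + 1 + 2).factorial : ℂ)
        = u * ∑' n : ℕ, u ^ n / ((n + 3).factorial : ℂ) := by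
      rw [← tsum_mul_left]
      refine tsum_congr fun n => ?_
      rw [show n + 1 + 2 = n + 3 by ring, pow_succ']
      ring
    rw [h2]
    norm_num [Nat.factorial]
  have K := ∑' n : ℕ, (1:ℝ) ^ n / n.factorial
  set K : ℝ := ∑' n : ℕ, (1:ℝ) ^ n / n.factorial with hK
  have hbound : ∀ u : ℂ, ‖u‖ ≤ 1 → ‖Ee u - 1/2‖ ≤ K * ‖u‖ := by
    intro u hu
    rw [hEe u]
    have h1 : ‖(1:ℂ)/2 + u * ∑' n : ℕ, u ^ n / ((n + 3).factorial : ℂ) - 1/2‖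
        = ‖u‖ * ‖∑' n : ℕ, u ^ n / ((n + 3).factorial : ℂ)‖ := by
      rw [add_sub_cancel_left, norm_mul]
    rw [h1, mul_comm]
    apply mul_le_mul_of_nonneg_right _ (norm_nonneg u)
    calc ‖∑' n : ℕ, u ^ n / ((n + 3).factorial : ℂ)‖
        ≤ ∑' n : ℕ, ‖u ^ n / ((n + 3).factorial : ℂ)‖ := by
          apply norm_tsum_le_tsum_norm
          exact (summable_aux u 3).norm
      _ ≤ K := by
          rw [hK]
          apply Summable.tsum_le_tsum _ (summable_aux u 3).norm
          · exact (Real.summable_pow_div_factorial 1).congr (by simp)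
          · intro n
            rw [norm_div, norm_pow, Complex.norm_natCast]
            apply div_le_div₀ (by positivity)
            · exact pow_le_one₀ (norm_nonneg u) hu |>.trans (by norm_num)
            · positivity
            · exact_mod_cast Nat.factorial_le (Nat.le_add_right n 3)
  have hsq : Tendsto (fun u : ℂ => Ee u - 1/2) (𝓝 0) (𝓝 0) := by
    apply squeeze_zero_norm' _ (t₀ := 𝓝 (0:ℂ)) ?_
    · exact fun u => K * ‖u‖
    · filter_upwards [Metric.ball_mem_nhds (0:ℂ) one_pos] with u hu
      exact hbound u (le_of_lt (by simpa using hu))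
    · have : Tendsto (fun u : ℂ => K * ‖u‖) (𝓝 0) (𝓝 (K * ‖(0:ℂ)‖)) := by
        exact (continuous_const.mul continuous_norm).tendsto 0
      simpa using this
  have := hsq.add (tendsto_const_nhds (x := (1/2 : ℂ)))
  simpa using this

set_option maxHeartbeats 1000000 in
/-- For every `τ ∈ ℍ` and `w` with `0 < |q| < |q_w| < 1`, the meromorphic
continuation (in `z`) `F` of `P̃₁(w,z,τ) := −∑_{n∈ℤ} q_w^n/(1 − q_z q^n)` satisfies
`lim_{z→0} ( P̃₁(w,z,τ) − 1/(2πiz) ) = P₁(w,τ) := −1/2 − ∑_{n≠0} q_w^n/(1−q^n)`. -/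
theorem Ptilde1_limit_at_zero (τ w : ℂ) (hτ : 0 < τ.im)
    (hqw : ‖eF τ‖ < ‖eF w‖) (hw1 : ‖eF w‖ < 1)
    (F : ℂ → ℂ)
    (hFanal : ∀ z : ℂ, (∀ l m : ℤ, z ≠ (l : ℂ) * τ + (m : ℂ)) → AnalyticAt ℂ F z)
    (hFagree : ∀ z : ℂ,
      ‖eF τ‖ < ‖eF z‖ → ‖eF z‖ < 1 →
      F z = -∑' n : ℤ, eF w ^ n / (1 - eF z * eF τ ^ n)) :
    Filter.Tendsto (fun z : ℂ => F z - 1 / (2 * (Real.pi : ℂ) * Complex.I * z))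
      (𝓝[≠] (0 : ℂ))
      (𝓝 (-(1/2) - ∑' n : ℤ, if n = 0 then 0 else eF w ^ n / (1 - eF τ ^ n))) := by
  have pi_pos := Real.pi_pos
  set A := ‖eF τ‖ with hA
  set B := ‖eF w‖ with hB
  have hA0 : 0 < A := norm_pos_iff.mpr (Complex.exp_ne_zero _)
  have hB0 : 0 < B := norm_pos_iff.mpr (Complex.exp_ne_zero _)
  have hA1 : A < 1 := lt_trans hqw hw1
  set c : ℝ := (1 + A) / 2 with hc
  have hAc : A < c := by rw [hc]; linarith
  have hc1 : c < 1 := by rw [hc]; linarith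
  have hc0 : 0 < c := by rw [hc]; linarith
  have hlogpos : 0 < Real.log (c / A) / (2 * Real.pi) := by
    apply div_pos _ (by positivity)
    apply Real.log_pos
    rw [lt_div_iff₀ hA0]; linarith
  set r : ℝ := min 1 (min τ.im (Real.log (c / A) / (2 * Real.pi))) with hr
  have hr0 : 0 < r := lt_min one_pos (lt_min hτ hlogpos)
  have hr1 : r ≤ 1 := min_le_left _ _
  have hrτ : r ≤ τ.im := le_trans (min_le_right _ _) (min_le_left _ _)
  set T : ℝ := Real.exp (2 * Real.pi * r) with hT
  have hT1 : 1 ≤ T := by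
    rw [hT]; rw [show (1:ℝ) = Real.exp 0 by simp]
    exact Real.exp_le_exp.mpr (by positivity)
  have hT0 : 0 < T := Real.exp_pos _
  have hTA : T * A ≤ c := by
    have h1 : 2 * Real.pi * r ≤ Real.log (c / A) := by
      calc 2 * Real.pi * r ≤ 2 * Real.pi * (Real.log (c / A) / (2 * Real.pi)) := by
            apply mul_le_mul_of_nonneg_left _ (by positivity)
            exact le_trans (min_le_right _ _) (min_le_right _ _)
        _ = Real.log (c / A) := by field_simp
    have h2 : T ≤ c / A := by
      rw [hT, ← Real.exp_log (show (0:ℝ) < c / A by positivity)]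
      exact Real.exp_le_exp.mpr h1
    calc T * A ≤ (c / A) * A := by exact mul_le_mul_of_nonneg_right h2 hA0.le
      _ = c := by field_simp
  -- bounds on |eF z| for z in the ball
  have heFz_le : ∀ z ∈ Metric.ball (0:ℂ) r, ‖eF z‖ ≤ T := by
    intro z hz
    rw [abs_eF, hT]
    apply Real.exp_le_exp.mpr
    have h1 : |z.im| < r := lt_of_le_of_lt (Complex.abs_im_le_norm z) (by simpa using hz)
    nlinarith [abs_le.mp h1.le]
  have heFz_ge : ∀ z ∈ Metric.ball (0:ℂ) r, 1 / T ≤ ‖eF z‖ := by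
    intro z hz
    rw [abs_eF, hT, one_div, ← Real.exp_neg]
    apply Real.exp_le_exp.mpr
    have h1 : |z.im| < r := lt_of_le_of_lt (Complex.abs_im_le_norm z) (by simpa using hz)
    nlinarith [abs_le.mp h1.le]
  -- term bound and denominator nonvanishing
  set ρ : ℝ := max B (A / B) with hρ
  have hρ1 : ρ < 1 := max_lt hw1 (by rw [div_lt_one hB0]; exact hqw)
  have hρ0 : 0 < ρ := lt_of_lt_of_le hB0 (le_max_left _ _)
  set M : ℝ := T / (1 - c) with hM
  have hM0 : 0 < M := div_pos hT0 (by linarith)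
  set f : ℤ → ℂ → ℂ := fun n z => if n = 0 then 0 else eF w ^ n / (1 - eF z * eF τ ^ n) with hf
  set u : ℤ → ℝ := fun n => M * ρ ^ n.natAbs with hu
  have habs_zpow : ∀ n : ℤ, ‖eF τ ^ n‖ = A ^ n := fun n => norm_zpow _ n
  have hbound : ∀ n : ℤ, ∀ z ∈ Metric.ball (0:ℂ) r,
      ‖f n z‖ ≤ u n ∧ (n ≠ 0 → 1 - eF z * eF τ ^ n ≠ 0) := by
    intro n z hz
    rcases eq_or_ne n 0 with hn0 | hn0
    · subst hn0
      refine ⟨?_, fun h => absurd rfl h⟩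
      simp only [hf, if_pos rfl, norm_zero, hu, Int.natAbs_zero, pow_zero, mul_one]
      exact hM0.le
    · obtain ⟨m, rfl | rfl⟩ := Int.eq_nat_or_neg n
      · -- n = m ≥ 1
        have hm1 : 1 ≤ m := Nat.one_le_iff_ne_zero.mpr (by simpa using hn0)
        have hAm : A ^ m ≤ A := by
          calc A ^ m ≤ A ^ 1 := pow_le_pow_of_le_one hA0.le hA1.le hm1
            _ = A := pow_one A
        have hTAm : T * A ^ m ≤ c := le_trans (by nlinarith) hTA
        have hxle : ‖eF z * eF τ ^ (m:ℤ)‖ ≤ c := by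
          rw [norm_mul, habs_zpow, zpow_natCast]
          calc ‖eF z‖ * A ^ m ≤ T * A ^ m := by
                apply mul_le_mul_of_nonneg_right (heFz_le z hz) (by positivity)
            _ ≤ c := hTAm
        have hden : 1 - eF z * eF τ ^ (m:ℤ) ≠ 0 := by
          intro h0
          have h1 : eF z * eF τ ^ (m:ℤ) = 1 := by linear_combination -h0
          rw [h1] at hxle; simp at hxle; linarith
        refine ⟨?_, fun _ => hden⟩
        have h1x : 1 - c ≤ ‖1 - eF z * eF τ ^ (m:ℤ)‖ := by
          have h2 := norm_sub_norm_le (1 : ℂ) (eF z * eF τ ^ (m:ℤ))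
          simp only [norm_one] at h2
          linarith
        rw [hf]
        simp only [if_neg hn0]
        rw [norm_div, norm_zpow, zpow_natCast]
        have hBρ : ‖eF w‖ ^ m ≤ T * ρ ^ m := by
          calc ‖eF w‖ ^ m = B ^ m := by rw [hB]
            _ ≤ ρ ^ m := pow_le_pow_left₀ hB0.le (le_max_left _ _) m
            _ ≤ T * ρ ^ m := le_mul_of_one_le_left (by positivity) hT1
        calc ‖eF w‖ ^ m / ‖1 - eF z * eF τ ^ (m:ℤ)‖
            ≤ (T * ρ ^ m) / (1 - c) := by
              apply div_le_div₀ (by positivity) hBρ (by linarith) h1x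
          _ = u (m:ℤ) := by
              rw [hu, hM]
              simp only [Int.natAbs_natCast]
              ring
      · -- n = -m, m ≥ 1
        have hm1 : 1 ≤ m := Nat.one_le_iff_ne_zero.mpr (by simpa using hn0)
        have hAm : A ^ m ≤ A := by
          calc A ^ m ≤ A ^ 1 := pow_le_pow_of_le_one hA0.le hA1.le hm1
            _ = A := pow_one A
        have hTAm : T * A ^ m ≤ c := le_trans (by nlinarith) hTA
        have hzpow : ‖eF τ ^ (-(m:ℤ))‖ = (A ^ m)⁻¹ := by
          rw [habs_zpow, zpow_neg, zpow_natCast]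
        have hxge : 1 / (T * A ^ m) ≤ ‖eF z * eF τ ^ (-(m:ℤ))‖ := by
          rw [norm_mul, hzpow]
          calc 1 / (T * A ^ m) = (1 / T) * (A ^ m)⁻¹ := by
                rw [one_div, mul_inv, one_div]
            _ ≤ ‖eF z‖ * (A ^ m)⁻¹ :=
                mul_le_mul_of_nonneg_right (heFz_ge z hz) (by positivity)
        have hcgt : 1 < 1 / (T * A ^ m) := by
          rw [lt_div_iff₀ (by positivity), one_mul]
          linarith
        have hxgt1 : 1 < ‖eF z * eF τ ^ (-(m:ℤ))‖ := lt_of_lt_of_le hcgt hxge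
        have hden : 1 - eF z * eF τ ^ (-(m:ℤ)) ≠ 0 := by
          intro h0
          have h1 : eF z * eF τ ^ (-(m:ℤ)) = 1 := by linear_combination -h0
          rw [h1] at hxgt1; simp at hxgt1
        refine ⟨?_, fun _ => hden⟩
        have h3 : 1 ≤ c * ‖eF z * eF τ ^ (-(m:ℤ))‖ := by
          rw [div_le_iff₀ (by positivity)] at hxge
          calc (1:ℝ) ≤ ‖eF z * eF τ ^ (-(m:ℤ))‖ * (T * A ^ m) := hxge
            _ ≤ ‖eF z * eF τ ^ (-(m:ℤ))‖ * c := by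
                apply mul_le_mul_of_nonneg_left hTAm (by positivity)
            _ = c * ‖eF z * eF τ ^ (-(m:ℤ))‖ := mul_comm _ _
        have h1x : (1 - c) / (T * A ^ m) ≤ ‖1 - eF z * eF τ ^ (-(m:ℤ))‖ := by
          have h2 : ‖eF z * eF τ ^ (-(m:ℤ))‖ - 1
              ≤ ‖1 - eF z * eF τ ^ (-(m:ℤ))‖ := by
            have h2' := norm_sub_norm_le (eF z * eF τ ^ (-(m:ℤ))) (1 : ℂ)
            simp only [norm_one] at h2'
            rw [show (1 : ℂ) - eF z * eF τ ^ (-(m:ℤ)) = -(eF z * eF τ ^ (-(m:ℤ)) - 1) by ring,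
              norm_neg]
            exact h2'
          have h5 : (1 - c) / (T * A ^ m) ≤ (1 - c) * ‖eF z * eF τ ^ (-(m:ℤ))‖ := by
            rw [div_eq_mul_inv]
            apply mul_le_mul_of_nonneg_left _ (by linarith)
            calc (T * A ^ m)⁻¹ = 1 / (T * A ^ m) := (one_div _).symm
              _ ≤ ‖eF z * eF τ ^ (-(m:ℤ))‖ := hxge
          nlinarith
        rw [hf]
        simp only [if_neg hn0]
        rw [norm_div, norm_zpow, zpow_neg, zpow_natCast]
        calc (‖eF w‖ ^ m)⁻¹ / ‖1 - eF z * eF τ ^ (-(m:ℤ))‖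
            ≤ (B ^ m)⁻¹ / ((1 - c) / (T * A ^ m)) := by
              apply div_le_div₀ (by positivity) (by rw [hB])
                (div_pos (by linarith) (by positivity)) h1x
          _ = M * (A / B) ^ m := by
              rw [div_div_eq_mul_div, div_pow, hM]
              field_simp
          _ ≤ u (-(m:ℤ)) := by
              rw [hu]
              simp only [Int.natAbs_neg, Int.natAbs_natCast]
              apply mul_le_mul_of_nonneg_left _ hM0.le
              exact pow_le_pow_left₀ (by positivity) (le_max_right _ _) m
  have hu_sum : Summable u := by
    rw [hu]
    apply Summable.mul_left
    have hpos : Summable (fun n : ℕ => ρ ^ n) := summable_geometric_of_lt_one hρ0.le hρ1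
    refine Summable.of_nat_of_neg (hpos.congr fun n => by simp) (hpos.congr fun n => by simp)
  have heFdiff : Differentiable ℂ eF := by
    unfold eF
    fun_prop
  have hfdiff : ∀ n : ℤ, DifferentiableOn ℂ (f n) (Metric.ball (0:ℂ) r) := by
    intro n
    rcases eq_or_ne n 0 with hn0 | hn0
    · subst hn0
      simp only [hf, if_pos rfl]
      exact differentiableOn_const 0
    · have : f n = fun z => eF w ^ n / (1 - eF z * eF τ ^ n) := by
        funext z; rw [hf]; simp only [if_neg hn0]
      rw [this]
      apply DifferentiableOn.div (differentiableOn_const _)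
      · exact (differentiableOn_const _).sub ((heFdiff.differentiableOn).mul (differentiableOn_const _))
      · intro z hz
        exact (hbound n z hz).2 hn0
  set S : ℂ → ℂ := fun z => ∑' n : ℤ, f n z with hS
  have hSdiff : DifferentiableOn ℂ S (Metric.ball (0:ℂ) r) := by
    rw [hS]
    exact differentiableOn_tsum_of_summable_norm hu_sum hfdiff Metric.isOpen_ball
      (fun n z hz => (hbound n z hz).1)
  have hSanal : AnalyticOnNhd ℂ S (Metric.ball (0:ℂ) r) :=
    hSdiff.analyticOnNhd Metric.isOpen_ball
  -- preconnectedness of the punctured ball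
  have hUconn : IsPreconnected (Metric.ball (0:ℂ) r \ {0}) := by
    have himage : (fun p : ℝ × ℝ => (p.1 : ℂ) * Complex.exp ((p.2 : ℂ) * Complex.I)) ''
        (Set.Ioo (0:ℝ) r ×ˢ (Set.univ : Set ℝ)) = Metric.ball (0:ℂ) r \ {0} := by
      ext x
      constructor
      · rintro ⟨⟨t, θ⟩, ⟨ht, -⟩, rfl⟩
        simp only [Set.mem_Ioo] at ht
        have habs : ‖(t : ℂ) * Complex.exp ((θ : ℂ) * Complex.I)‖ = t := by
          rw [norm_mul, Complex.norm_exp_ofReal_mul_I, mul_one, Complex.norm_real, Real.norm_eq_abs,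
            abs_of_pos ht.1]
        constructor
        · rw [Metric.mem_ball, dist_zero_right, habs]
          exact ht.2
        · simp only [Set.mem_singleton_iff]
          intro h0
          rw [h0] at habs
          simp at habs
          linarith [ht.1, habs]
      · rintro ⟨hx, hx0⟩
        simp only [Set.mem_singleton_iff] at hx0
        refine ⟨(‖x‖, x.arg), ⟨Set.mem_Ioo.mpr ⟨?_, ?_⟩, trivial⟩, ?_⟩
        · exact norm_pos_iff.mpr hx0
        · rw [Metric.mem_ball, dist_zero_right] at hx
          exact hx
        · exact Complex.norm_mul_exp_arg_mul_I x
    rw [← himage]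
    apply IsPreconnected.image (isPreconnected_Ioo.prod isPreconnected_univ)
    apply Continuous.continuousOn
    fun_prop
  -- points of the punctured ball avoid the lattice and the integers
  have hsmall : ∀ z : ℂ, z ∈ Metric.ball (0:ℂ) r \ {0} → ∀ k : ℤ, k ≠ 0 → z ≠ (k : ℂ) := by
    intro z hz k hk0 heq
    have hzr : ‖z‖ < r := by
      have := hz.1
      rwa [Metric.mem_ball, dist_zero_right] at this
    have h1 : (1:ℝ) ≤ ‖z‖ := by
      rw [heq]
      rw [show ((k : ℂ)) = ((k : ℝ) : ℂ) by push_cast; ring, Complex.norm_real, Real.norm_eq_abs]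
      rw [show |(k:ℝ)| = ((|k| : ℤ) : ℝ) by push_cast; ring]
      exact_mod_cast Int.one_le_abs hk0
    linarith
  have hlat : ∀ z : ℂ, z ∈ Metric.ball (0:ℂ) r \ {0} → ∀ l m : ℤ, z ≠ (l : ℂ) * τ + (m : ℂ) := by
    intro z hz l m heq
    have hzr : ‖z‖ < r := by
      have := hz.1
      rwa [Metric.mem_ball, dist_zero_right] at this
    rcases eq_or_ne l 0 with hl0 | hl0
    · subst hl0
      simp only [Int.cast_zero, zero_mul, zero_add] at heq
      rcases eq_or_ne m 0 with hm0 | hm0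
      · subst hm0
        simp only [Int.cast_zero] at heq
        exact hz.2 heq
      · exact hsmall z hz m hm0 heq
    · have him : z.im = (l : ℝ) * τ.im := by
        rw [heq]
        simp [Complex.add_im, Complex.mul_im]
      have h1 : τ.im ≤ |z.im| := by
        rw [him, abs_mul]
        have hl1 : (1:ℝ) ≤ |(l:ℝ)| := by
          rw [show |(l:ℝ)| = ((|l| : ℤ) : ℝ) by push_cast; ring]
          exact_mod_cast Int.one_le_abs hl0
        rw [abs_of_pos hτ]
        nlinarith [abs_nonneg (l:ℝ), hτ]
      have h2 : |z.im| ≤ ‖z‖ := Complex.abs_im_le_norm z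
      linarith
  have hne1 : ∀ z : ℂ, z ∈ Metric.ball (0:ℂ) r \ {0} → 1 - eF z ≠ 0 := by
    intro z hz h0
    have h1 : eF z = 1 := by linear_combination -h0
    rw [eF, Complex.exp_eq_one_iff] at h1
    obtain ⟨k, hk⟩ := h1
    have h2πI : (2 * (Real.pi : ℂ) * Complex.I) ≠ 0 := by
      exact mul_ne_zero (mul_ne_zero two_ne_zero
        (Complex.ofReal_ne_zero.mpr Real.pi_ne_zero)) Complex.I_ne_zero
    have hzk : z = (k : ℂ) := by
      have h3 : (2 * (Real.pi : ℂ) * Complex.I) * z = (2 * (Real.pi : ℂ) * Complex.I) * (k : ℂ) := by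
        linear_combination hk
      exact mul_left_cancel₀ h2πI h3
    rcases eq_or_ne k 0 with hk0 | hk0
    · rw [hk0] at hzk; simp at hzk; exact hz.2 hzk
    · exact hsmall z hz k hk0 hzk
  set φ : ℂ → ℂ := fun z => F z + 1 / (1 - eF z) with hφ
  have heFanal : ∀ z : ℂ, AnalyticAt ℂ eF z := by
    intro z
    apply Differentiable.analyticAt heFdiff
  have hφanal : AnalyticOnNhd ℂ φ (Metric.ball (0:ℂ) r \ {0}) := by
    intro z hz
    apply AnalyticAt.add
    · exact hFanal z (hlat z hz)
    · exact AnalyticAt.div analyticAt_const (analyticAt_const.sub (heFanal z)) (hne1 z hz)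
  have hEqV : ∀ z : ℂ, z ∈ Metric.ball (0:ℂ) r → 0 < z.im → φ z = -S z := by
    intro z hzb hzim
    have hzr : ‖z‖ < r := by
      rwa [Metric.mem_ball, dist_zero_right] at hzb
    have him_lt : z.im < τ.im :=
      lt_of_le_of_lt (le_trans (le_abs_self _) (Complex.abs_im_le_norm z)) (lt_of_lt_of_le hzr hrτ)
    have habs1 : ‖eF z‖ < 1 := by
      rw [abs_eF]
      calc Real.exp (-(2 * Real.pi * z.im)) < Real.exp 0 :=
            Real.exp_lt_exp.mpr (by nlinarith)
        _ = 1 := Real.exp_zero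
    have habsA : A < ‖eF z‖ := by
      rw [hA, abs_eF, abs_eF]
      exact Real.exp_lt_exp.mpr (by nlinarith)
    have hagree := hFagree z habsA habs1
    have hsum_f : Summable (fun n : ℤ => f n z) := by
      apply Summable.of_norm_bounded hu_sum
      intro n; exact (hbound n z hzb).1
    have hgf : (fun n : ℤ => eF w ^ n / (1 - eF z * eF τ ^ n))
        = fun n => f n z + if n = 0 then 1 / (1 - eF z) else 0 := by
      funext n
      rcases eq_or_ne n 0 with h | h
      · subst h
        rw [hf]
        simp
      · rw [hf]
        simp [h]
    have hsum_ind : Summable (fun n : ℤ => if n = 0 then 1/(1 - eF z) else 0) :=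
      summable_of_ne_finset_zero (s := ({0} : Finset ℤ)) (fun n hn => if_neg (by simpa using hn))
    have htsum : ∑' n : ℤ, eF w ^ n / (1 - eF z * eF τ ^ n) = S z + 1/(1 - eF z) := by
      rw [hgf, Summable.tsum_add hsum_f hsum_ind, hS]
      congr 1
      exact tsum_ite_eq 0 _
    rw [hφ]
    simp only
    rw [hagree, htsum]
    ring
  have hz₀mem : ((r/2 : ℝ) : ℂ) * Complex.I ∈ Metric.ball (0:ℂ) r \ {0} := by
    constructor
    · rw [Metric.mem_ball, dist_zero_right, norm_mul, Complex.norm_I,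
        mul_one, Complex.norm_real, Real.norm_eq_abs, abs_of_pos (by linarith)]
      linarith
    · simp only [Set.mem_singleton_iff, mul_eq_zero]
      push_neg
      constructor
      · exact_mod_cast (by positivity : (r/2 : ℝ) ≠ 0)
      · exact Complex.I_ne_zero
  have hEqU : Set.EqOn φ (fun z => -S z) (Metric.ball (0:ℂ) r \ {0}) := by
    apply AnalyticOnNhd.eqOn_of_preconnected_of_eventuallyEq hφanal
      (fun z hz => (hSanal z hz.1).neg) hUconn hz₀mem
    have hopen : IsOpen (Metric.ball (0:ℂ) r ∩ {z : ℂ | 0 < z.im}) :=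
      Metric.isOpen_ball.inter (isOpen_lt continuous_const Complex.continuous_im)
    have hz₀V : ((r/2 : ℝ) : ℂ) * Complex.I ∈ Metric.ball (0:ℂ) r ∩ {z : ℂ | 0 < z.im} := by
      refine ⟨hz₀mem.1, ?_⟩
      simp only [Set.mem_setOf_eq, Complex.mul_im, Complex.ofReal_re, Complex.ofReal_im,
        Complex.I_re, Complex.I_im]
      simp
      linarith
    apply Filter.eventuallyEq_of_mem (hopen.mem_nhds hz₀V)
    rintro z ⟨hz1, hz2⟩
    exact hEqV z hz1 hz2
  -- value at 0 and continuity of S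
  have heF0 : eF 0 = 1 := by simp [eF]
  have hS0 : S 0 = ∑' n : ℤ, if n = 0 then 0 else eF w ^ n / (1 - eF τ ^ n) := by
    rw [hS]
    apply tsum_congr
    intro n
    rcases eq_or_ne n 0 with h | h
    · subst h; rw [hf]; simp
    · rw [hf]; simp [h, heF0]
  have hScont : ContinuousAt S 0 :=
    (hSdiff.differentiableAt (Metric.isOpen_ball.mem_nhds (Metric.mem_ball_self hr0))).continuousAt
  have h2πI : (2 * (Real.pi : ℂ) * Complex.I) ≠ 0 :=
    mul_ne_zero (mul_ne_zero two_ne_zero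
      (Complex.ofReal_ne_zero.mpr Real.pi_ne_zero)) Complex.I_ne_zero
  have hu0 : Tendsto (fun z : ℂ => 2 * (Real.pi : ℂ) * Complex.I * z) (𝓝 0) (𝓝 0) := by
    have h : Tendsto (fun z : ℂ => 2 * (Real.pi : ℂ) * Complex.I * z) (𝓝 0)
        (𝓝 (2 * (Real.pi : ℂ) * Complex.I * 0)) := ((continuous_const (y := 2 * (Real.pi : ℂ) * Complex.I)).mul continuous_id).tendsto (0 : ℂ)
    simpa using h
  have hEez : Tendsto (fun z : ℂ => Ee (2 * (Real.pi : ℂ) * Complex.I * z)) (𝓝 0) (𝓝 (1/2)) :=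
    Ee_tendsto.comp hu0
  have hdent : Tendsto (fun z : ℂ =>
      1 + (2 * (Real.pi : ℂ) * Complex.I * z) * Ee (2 * (Real.pi : ℂ) * Complex.I * z))
      (𝓝 0) (𝓝 1) := by
    have := (tendsto_const_nhds (x := (1:ℂ)) (f := 𝓝 (0:ℂ))).add (hu0.mul hEez)
    simpa using this
  have hquot : Tendsto (fun z : ℂ =>
      Ee (2 * (Real.pi : ℂ) * Complex.I * z) /
        (1 + (2 * (Real.pi : ℂ) * Complex.I * z) * Ee (2 * (Real.pi : ℂ) * Complex.I * z)))
      (𝓝 0) (𝓝 ((1/2) / 1)) := Tendsto.div hEez hdent one_ne_zero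
  have hfinal : Tendsto (fun z : ℂ =>
      -S z - Ee (2 * (Real.pi : ℂ) * Complex.I * z) /
        (1 + (2 * (Real.pi : ℂ) * Complex.I * z) * Ee (2 * (Real.pi : ℂ) * Complex.I * z)))
      (𝓝[≠] (0:ℂ)) (𝓝 (-S 0 - (1/2) / 1)) :=
    ((hScont.tendsto.neg).sub hquot).mono_left nhdsWithin_le_nhds
  -- eventual equality
  have hb : ∀ᶠ z in 𝓝[≠] (0:ℂ), z ∈ Metric.ball (0:ℂ) r :=
    Filter.Eventually.filter_mono nhdsWithin_le_nhds
      (Metric.ball_mem_nhds (0:ℂ) hr0)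
  have hne : ∀ᶠ z in 𝓝[≠] (0:ℂ), z ≠ (0:ℂ) := eventually_mem_nhdsWithin
  have hden_ev : ∀ᶠ z in 𝓝[≠] (0:ℂ),
      1 + (2 * (Real.pi : ℂ) * Complex.I * z) * Ee (2 * (Real.pi : ℂ) * Complex.I * z) ≠ 0 :=
    (hdent.mono_left nhdsWithin_le_nhds).eventually_ne one_ne_zero
  have heq : (fun z : ℂ =>
      -S z - Ee (2 * (Real.pi : ℂ) * Complex.I * z) /
        (1 + (2 * (Real.pi : ℂ) * Complex.I * z) * Ee (2 * (Real.pi : ℂ) * Complex.I * z)))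
      =ᶠ[𝓝[≠] (0:ℂ)]
      (fun z : ℂ => F z - 1 / (2 * (Real.pi : ℂ) * Complex.I * z)) := by
    filter_upwards [hb, hne, hden_ev] with z hz1 hz2 hz3
    have hzU : z ∈ Metric.ball (0:ℂ) r \ {0} := ⟨hz1, hz2⟩
    have h1 : F z + 1 / (1 - eF z) = -S z := hEqU hzU
    have hu_ne : (2 * (Real.pi : ℂ) * Complex.I * z) ≠ 0 := mul_ne_zero h2πI hz2
    have hexp' : eF z = 1 + (2 * (Real.pi : ℂ) * Complex.I * z) +
        (2 * (Real.pi : ℂ) * Complex.I * z) ^ 2 * Ee (2 * (Real.pi : ℂ) * Complex.I * z) := by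
      rw [eF]
      exact exp_eq_Ee _
    have h1mef : 1 - eF z = -((2 * (Real.pi : ℂ) * Complex.I * z) *
        (1 + (2 * (Real.pi : ℂ) * Complex.I * z) * Ee (2 * (Real.pi : ℂ) * Complex.I * z))) := by
      rw [hexp']
      ring
    have hne0 : 1 - eF z ≠ 0 := hne1 z hzU
    have hF2 : F z = -S z - 1 / (1 - eF z) := by linear_combination h1
    rw [hF2, h1mef]
    field_simp
    ring
  have hgoal := hfinal.congr' heq
  convert hgoal using 2
  rw [← hS0]
  ring
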